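/- The pair (E₂, M₂) = (Surj ∩ Inj, Inv ∩ Tot) is a factorization system on Kl(T_M): (i) every Kleisli morphism f : X → Option (M × Z) factors as m ∘ e (Kleisli composition) with e in Surj ∩ Inj and m in Inv ∩ Tot; and (ii) for every commuting square v ∘ e = m ∘ u with e : X → Option (M × Y₁) in Surj ∩ Inj, m : Y₂ → Option (M × Z) in Inv ∩ Tot, u : X → Option (M × Y₂) and v : Y₁ → Option (M × Z), there is a unique d : Y₁ → Option (M × Y₂) with d ∘ e = u and m ∘ d = v. -/

import Mathlib

/-- Kleisli composition for the monad `T_M X = Option (M × X)`. -/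
def KlComp {M : Type} [Monoid M] {X Y Z : Type}
    (g : Y → Option (M × Z)) (f : X → Option (M × Y)) : X → Option (M × Z) :=
  fun x => (f x).bind fun p => (g p.2).map fun q => (p.1 * q.1, q.2)

/-- The Kleisli identity on `X`. -/
def KlId (M : Type) [Monoid M] (X : Type) : X → Option (M × X) :=
  fun x => some (1, x)

/-- A Kleisli morphism is an isomorphism when it has a two-sided inverse. -/
def IsKlIso {M : Type} [Monoid M] {X Y : Type} (f : X → Option (M × Y)) : Prop :=
  ∃ g : Y → Option (M × X), KlComp g f = KlId M X ∧ KlComp f g = KlId M Y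

/-- The class `Surj` of Kleisli morphisms. -/
def KlSurj {M X Y : Type} (f : X → Option (M × Y)) : Prop :=
  ∀ y : Y, ∃ (x : X) (υ : M), f x = some (υ, y)

/-- The class `Inj` of Kleisli morphisms. -/
def KlInj {M X Y : Type} (f : X → Option (M × Y)) : Prop :=
  ∀ (x x' : X) (υ υ' : M) (y : Y), f x = some (υ, y) → f x' = some (υ', y) → x = x'

/-- The class `Tot` of Kleisli morphisms. -/
def KlTot {M X Y : Type} (f : X → Option (M × Y)) : Prop :=
  ∀ x : X, f x ≠ none

/-- The class `Inv` of Kleisli morphisms. -/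
def KlInv {M : Type} [Monoid M] {X Y : Type} (f : X → Option (M × Y)) : Prop :=
  ∀ (x : X) (υ : M) (y : Y), f x = some (υ, y) → IsUnit υ

theorem factorization_system_E2_M2 (M : Type) [Monoid M] :
    (∀ (X Z : Type) (f : X → Option (M × Z)),
      ∃ (Y : Type) (e : X → Option (M × Y)) (m : Y → Option (M × Z)),
        KlComp m e = f ∧ (KlSurj e ∧ KlInj e) ∧ (KlInv m ∧ KlTot m)) ∧
    (∀ (X Y₁ Y₂ Z : Type) (e : X → Option (M × Y₁)) (m : Y₂ → Option (M × Z))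
        (u : X → Option (M × Y₂)) (v : Y₁ → Option (M × Z)),
      KlSurj e → KlInj e → KlInv m → KlTot m →
      KlComp v e = KlComp m u →
      ∃! d : Y₁ → Option (M × Y₂), KlComp d e = u ∧ KlComp m d = v) := by
  constructor
  ·
    intro X Z f
    refine ⟨{x : X // (f x).isSome},
      fun x => if h : (f x).isSome then some (((f x).get h).1, ⟨x, h⟩) else none,
      fun y => some (1, ((f y.1).get y.2).2), ?_, ⟨?_, ?_⟩, ?_, ?_⟩
    · funext x
      rcases h : f x with _ | ⟨υ, z⟩
      · simp [KlComp, h]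
      · have hs : (f x).isSome := by rw [h]; rfl
        simp [KlComp, hs, h]
    · rintro ⟨x, h⟩
      exact ⟨x, ((f x).get h).1, by simp [h]⟩
    · intro x x' υ υ' y hx hx'
      have h1 : x = y.1 := by
        by_cases h : (f x).isSome
        · simp [h] at hx; rw [← hx.2]
        · simp [h] at hx
      have h2 : x' = y.1 := by
        by_cases h : (f x').isSome
        · simp [h] at hx'; rw [← hx'.2]
        · simp [h] at hx'
      rw [h1, h2]
    · intro y υ z h
      simp only [Option.some.injEq, Prod.mk.injEq] at h
      exact h.1 ▸ isUnit_one
    · intro y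
      simp
  ·
    intro X Y₁ Y₂ Z e m u v hse hie him htm hsq
    choose φ υe hφ using hse
    have hm : ∀ y₂ : Y₂, ∃ p : M × Z, m y₂ = some p ∧ IsUnit p.1 := by
      intro y₂
      rcases h : m y₂ with _ | ⟨τ, z⟩
      · exact absurd h (htm y₂)
      · exact ⟨(τ, z), rfl, him y₂ τ z h⟩
    choose p hp hpu using hm
    have hσ : ∀ y₂, ∃ σ : M, (p y₂).1 * σ = 1 ∧ σ * (p y₂).1 = 1 := by
      intro y₂
      rcases hpu y₂ with ⟨w, hw⟩
      exact ⟨↑w⁻¹, by rw [← hw]; simp, by rw [← hw]; simp⟩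
    choose σ hσ1 hσ2 using hσ
    have hsq' := fun x => congrFun hsq x
    have key : ∀ y₁ : Y₁, ((v y₁).map fun q => (υe y₁ * q.1, q.2)) =
        ((u (φ y₁)).bind fun pr => some (pr.1 * (p pr.2).1, (p pr.2).2)) := by
      intro y₁
      have h := hsq' (φ y₁)
      simp only [KlComp, hφ y₁, Option.bind_some] at h
      rw [h]
      congr 1
      funext pr
      rw [hp pr.2]
      rfl
    have hnone : ∀ x : X, e x = none → u x = none := by
      intro x hex
      have h := hsq' x
      simp only [KlComp, hex, Option.bind_none] at h
      rcases hux : u x with _ | ⟨ν, y₂⟩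
      · rfl
      · rw [hux, Option.bind_some, hp y₂] at h
        exact absurd h.symm (by simp)
    set d : Y₁ → Option (M × Y₂) := fun y₁ =>
      (u (φ y₁)).bind fun pr => (v y₁).map fun q => (q.1 * σ pr.2, pr.2) with hd
    have keyv : ∀ (y₁ : Y₁) (ν : M) (y₂ : Y₂), u (φ y₁) = some (ν, y₂) →
        ∃ μ : M, v y₁ = some (μ, (p y₂).2) ∧ υe y₁ * μ = ν * (p y₂).1 := by
      intro y₁ ν y₂ hux
      have h := key y₁
      rw [hux, Option.bind_some] at h
      rcases hv : v y₁ with _ | ⟨μ, z⟩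
      · rw [hv] at h; exact absurd h (by simp)
      · rw [hv] at h
        simp only [Option.map_some, Option.some.injEq, Prod.mk.injEq] at h
        exact ⟨μ, by rw [h.2], h.1⟩
    have hd1 : KlComp d e = u := by
      funext x
      rcases hex : e x with _ | ⟨υ', y₁⟩
      · simp only [KlComp, hex, Option.bind_none]
        exact (hnone x hex).symm
      · have hx : x = φ y₁ := hie x (φ y₁) υ' (υe y₁) y₁ hex (hφ y₁)
        subst hx
        have hυ : υe y₁ = υ' := by
          rw [hφ y₁] at hex; simpa using hex
        subst hυ
        rcases hux : u (φ y₁) with _ | ⟨ν, y₂⟩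
        · simp only [KlComp, hex, Option.bind_some, hd, hux, Option.bind_none,
            Option.map_none]
        · obtain ⟨μ, hv, hw⟩ := keyv y₁ ν y₂ hux
          simp only [KlComp, hex, Option.bind_some, hd, hux, hv, Option.map_some,
            Option.some.injEq, Prod.mk.injEq]
          exact ⟨by rw [← mul_assoc, hw, mul_assoc, hσ1 y₂, mul_one], trivial⟩
    have hd2 : KlComp m d = v := by
      funext y₁
      rcases hux : u (φ y₁) with _ | ⟨ν, y₂⟩
      · have h := key y₁
        rw [hux, Option.bind_none] at h
        rcases hv : v y₁ with _ | ⟨μ, z⟩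
        · simp [KlComp, hd, hux, hv]
        · rw [hv] at h; exact absurd h (by simp)
      · obtain ⟨μ, hv, hw⟩ := keyv y₁ ν y₂ hux
        simp only [KlComp, hd, hux, hv, Option.bind_some, Option.map_some, hp y₂,
          Option.some.injEq, Prod.mk.injEq]
        exact ⟨by rw [mul_assoc, hσ2 y₂, mul_one], trivial⟩
    refine ⟨d, ⟨hd1, hd2⟩, ?_⟩
    intro d' ⟨h1, h2⟩
    funext y₁
    have hu' : ((d' y₁).map fun q => (υe y₁ * q.1, q.2)) = u (φ y₁) := by
      have := congrFun h1 (φ y₁)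
      simpa only [KlComp, hφ y₁, Option.bind_some] using this
    rcases hux : u (φ y₁) with _ | ⟨ν, y₂⟩
    · rw [hux] at hu'
      have hd'n : d' y₁ = none := by
        rcases hd' : d' y₁ with _ | q
        · rfl
        · rw [hd'] at hu'; exact absurd hu' (by simp)
      rw [hd'n]
      simp [hd, hux]
    · rw [hux] at hu'
      rcases hd' : d' y₁ with _ | ⟨w, y₂'⟩
      · rw [hd'] at hu'; exact absurd hu' (by simp)
      · rw [hd'] at hu'
        simp only [Option.map_some, Option.some.injEq, Prod.mk.injEq] at hu'
        obtain ⟨hw1, hy2⟩ := hu'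
        subst hy2
        obtain ⟨μ, hv, -⟩ := keyv y₁ ν y₂' hux
        have h2' := congrFun h2 y₁
        simp only [KlComp, hd', Option.bind_some, hp y₂', Option.map_some, hv,
          Option.some.injEq, Prod.mk.injEq] at h2'
        obtain ⟨hwτ, -⟩ := h2'
        have hwval : w = μ * σ y₂' := by
          have h3 : w * ((p y₂').1 * σ y₂') = μ * σ y₂' := by
            rw [← mul_assoc, hwτ]
          rwa [hσ1 y₂', mul_one] at h3
        simp only [hd, hux, hv, Option.bind_some, Option.map_some]
        rw [hwval]
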